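/- Let (u_i)_{i∈I} and (v_j)_{j∈J} be vectors in ℝ^d with ⟨u_i, v_j⟩ ≤ 1 for all i, j, let L = span(v_j : j ∈ J), and define a_{ij} = 1 − ⟨u_i, v_j⟩. Suppose the number of distinct values among the a_{ij} is at most k. Then there is a convex set C ⊆ ℝ^d of the form C = C' + L^⊥, where C' ⊆ L is the image under an affine map of a section of the cone of r×r symmetric PSD matrices by an affine subspace with r ≤ C(d + k, k − 1), such that u_i ∈ C for all i ∈ I and ⟨x, v_j⟩ ≤ 1 for all x ∈ C and all j ∈ J. -/

import Mathlib

open Pointwise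
open scoped Matrix

noncomputable section StmtAux

/-- monomial evaluation: coordinates of `x` extended by the constant 1 -/
def xe {d : ℕ} (x : EuclideanSpace ℝ (Fin d)) : Option (Fin d) → ℝ :=
  fun o => o.elim 1 (fun s => x s)

def phi {d K : ℕ} (m : Sym (Option (Fin d)) K) (x : EuclideanSpace ℝ (Fin d)) : ℝ :=
  (Multiset.map (xe x) (m : Multiset (Option (Fin d)))).prod

lemma expand_pow {d K : ℕ} (v : EuclideanSpace ℝ (Fin d)) (t : ℕ) (ht : t ≤ K) :
    ∃ w : Sym (Option (Fin d)) K → ℝ,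
      ∀ x : EuclideanSpace ℝ (Fin d),
        (1 - (inner ℝ x v : ℝ)) ^ t = ∑ m : Sym (Option (Fin d)) K, w m * phi m x := by
  classical
  let c : Option (Fin d) → ℝ := fun o => o.elim 1 (fun s => -(v s))
  let e : Option (Fin d) → ℝ := fun o => o.elim 1 (fun _ => 0)
  let σ : (Fin t → Option (Fin d)) × (Fin (K - t) → Option (Fin d)) → Sym (Option (Fin d)) K :=
    fun p => ⟨Multiset.map p.1 Finset.univ.val + Multiset.map p.2 Finset.univ.val, by
      simp [Nat.add_sub_cancel' ht]⟩
  refine ⟨fun m => ∑ p ∈ Finset.univ.filter (fun p => σ p = m),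
      (∏ s, c (p.1 s)) * (∏ s, e (p.2 s)), fun x => ?_⟩
  have hphi : ∀ p, phi (σ p) x = (∏ s, xe x (p.1 s)) * (∏ s, xe x (p.2 s)) := by
    intro p
    have hco : ((σ p : Multiset (Option (Fin d))))
        = Multiset.map p.1 Finset.univ.val + Multiset.map p.2 Finset.univ.val := rfl
    rw [phi, hco, Multiset.map_add, Multiset.prod_add, Multiset.map_map, Multiset.map_map,
      Finset.prod_eq_multiset_prod, Finset.prod_eq_multiset_prod]
    rfl
  have hc : (1 - (inner ℝ x v : ℝ)) = ∑ o : Option (Fin d), c o * xe x o := by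
    simp only [Fintype.sum_option, xe, c, Option.elim]
    rw [PiLp.inner_apply]
    simp only [RCLike.inner_apply, conj_trivial]
    have h2 : ∀ s : Fin d, -(v s) * x s = -(x s * v s) := fun s => by ring
    simp [h2, sub_eq_add_neg, mul_comm]
  have he : (1 : ℝ) = ∑ o : Option (Fin d), e o * xe x o := by
    simp [Fintype.sum_option, xe, e]
  calc (1 - (inner ℝ x v : ℝ)) ^ t
      = (∑ o : Option (Fin d), c o * xe x o) ^ t
        * (∑ o : Option (Fin d), e o * xe x o) ^ (K - t) := by
        rw [← hc, ← he, one_pow, mul_one]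
    _ = ∑ p : (Fin t → Option (Fin d)) × (Fin (K - t) → Option (Fin d)),
          ((∏ s, c (p.1 s)) * (∏ s, e (p.2 s))) * phi (σ p) x := by
        rw [Finset.sum_pow' Finset.univ _ t, Finset.sum_pow' Finset.univ _ (K - t),
          Fintype.piFinset_univ, Fintype.piFinset_univ, Finset.sum_mul_sum,
          Fintype.sum_prod_type]
        refine Finset.sum_congr rfl fun g₁ _ => Finset.sum_congr rfl fun g₂ _ => ?_
        rw [hphi (g₁, g₂), Finset.prod_mul_distrib, Finset.prod_mul_distrib]
        ring
    _ = ∑ m : Sym (Option (Fin d)) K, (∑ p ∈ Finset.univ.filter (fun p => σ p = m),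
          (∏ s, c (p.1 s)) * (∏ s, e (p.2 s))) * phi m x := by
        rw [← Finset.sum_fiberwise Finset.univ σ
          (fun p => ((∏ s, c (p.1 s)) * (∏ s, e (p.2 s))) * phi (σ p) x)]
        refine Finset.sum_congr rfl fun m _ => ?_
        rw [Finset.sum_mul]
        refine Finset.sum_congr rfl fun p hp => ?_
        rw [(Finset.mem_filter.mp hp).2]

lemma expand_poly {d K : ℕ} (f : Polynomial ℝ) (hf : f.natDegree < K + 1)
    (v : EuclideanSpace ℝ (Fin d)) :
    ∃ w : Sym (Option (Fin d)) K → ℝ,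
      ∀ x : EuclideanSpace ℝ (Fin d),
        f.eval (1 - (inner ℝ x v : ℝ)) = ∑ m : Sym (Option (Fin d)) K, w m * phi m x := by
  classical
  have H : ∀ t : Fin (K + 1), ∃ w : Sym (Option (Fin d)) K → ℝ,
      ∀ x : EuclideanSpace ℝ (Fin d),
        (1 - (inner ℝ x v : ℝ)) ^ (t : ℕ) = ∑ m, w m * phi m x :=
    fun t => expand_pow v t (by omega)
  choose W hW using H
  refine ⟨fun m => ∑ t : Fin (K + 1), f.coeff t * W t m, fun x => ?_⟩
  rw [Polynomial.eval_eq_sum_range' hf, ← Fin.sum_univ_eq_sum_range]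
  calc ∑ t : Fin (K + 1), f.coeff t * (1 - (inner ℝ x v : ℝ)) ^ (t : ℕ)
      = ∑ t : Fin (K + 1), ∑ m, f.coeff t * (W t m * phi m x) := by
        refine Finset.sum_congr rfl fun t _ => ?_
        rw [hW t x, Finset.mul_sum]
    _ = ∑ m, (∑ t : Fin (K + 1), f.coeff t * W t m) * phi m x := by
        rw [Finset.sum_comm]
        refine Finset.sum_congr rfl fun m _ => ?_
        rw [Finset.sum_mul]
        exact Finset.sum_congr rfl fun t _ => by ring

lemma interp_exists {k : ℕ} (hk : 0 < k) (S : Finset ℝ) (hS : S.card ≤ k) :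
    ∃ f : Polynomial ℝ, f.natDegree < k ∧ ∀ s ∈ S, 0 ≤ s → f.eval s = Real.sqrt s := by
  classical
  set S' := S.filter (fun s => 0 ≤ s) with hS'
  refine ⟨Lagrange.interpolate S' id Real.sqrt, ?_, ?_⟩
  · rcases eq_or_ne (Lagrange.interpolate S' id Real.sqrt) 0 with h | h
    · rw [h]; simpa using hk
    · rw [Polynomial.natDegree_lt_iff_degree_lt h]
      calc (Lagrange.interpolate S' id Real.sqrt).degree < (S'.card : WithBot ℕ) :=
            Lagrange.degree_interpolate_lt _ (Set.injOn_id _)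
        _ ≤ (k : WithBot ℕ) := by
            exact_mod_cast Nat.cast_le.mpr (le_trans (Finset.card_filter_le _ _) hS)
  · intro s hs hs0
    have hmem : s ∈ S' := Finset.mem_filter.mpr ⟨hs, hs0⟩
    simpa using Lagrange.eval_interpolate_at_node Real.sqrt (Set.injOn_id _) hmem

lemma quad_vecMulVec {n : ℕ} (a w : Fin n → ℝ) :
    w ⬝ᵥ (Matrix.vecMulVec a a *ᵥ w) = (a ⬝ᵥ w) * (a ⬝ᵥ w) := by
  simp only [dotProduct, Matrix.mulVec, Matrix.vecMulVec_apply, Finset.sum_mul,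
    Finset.mul_sum]
  refine Finset.sum_congr rfl fun i _ => Finset.sum_congr rfl fun j _ => by ring

lemma psd_vecMulVec {n : ℕ} (a : Fin n → ℝ) : (Matrix.vecMulVec a a).PosSemidef := by
  refine Matrix.PosSemidef.of_dotProduct_mulVec_nonneg ?_ ?_
  · ext i j
    simp [Matrix.conjTranspose_apply, Matrix.vecMulVec_apply, mul_comm]
  · intro x
    have : star x = x := by simp
    rw [this, quad_vecMulVec]
    exact mul_self_nonneg _

lemma convex_psd {n : ℕ} : Convex ℝ {M : Matrix (Fin n) (Fin n) ℝ | M.PosSemidef} := by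
  intro M hM N hN a b ha hb hab
  refine Matrix.PosSemidef.of_dotProduct_mulVec_nonneg ?_ (fun x => ?_)
  · have h1 := hM.1
    have h2 := hN.1
    unfold Matrix.IsHermitian at h1 h2 ⊢
    rw [Matrix.conjTranspose_add, Matrix.conjTranspose_smul, Matrix.conjTranspose_smul, h1, h2]
    simp
  · have h1 := hM.dotProduct_mulVec_nonneg x
    have h2 := hN.dotProduct_mulVec_nonneg x
    simp only [star_trivial] at h1 h2 ⊢
    simp only [Matrix.add_mulVec, Matrix.smul_mulVec, dotProduct_add,
      dotProduct_smul, smul_eq_mul]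
    nlinarith [mul_nonneg ha h1, mul_nonneg hb h2]

lemma mem_orth_span {F : Type*} [NormedAddCommGroup F] [InnerProductSpace ℝ F] {s : Set F} {x : F}
    (h : ∀ z ∈ s, (inner ℝ z x : ℝ) = 0) : x ∈ (Submodule.span ℝ s)ᗮ := by
  rw [Submodule.mem_orthogonal]
  intro z hz
  induction hz using Submodule.span_induction with
  | mem z hz => exact h z hz
  | zero => simp
  | add _ _ _ _ h1 h2 => rw [inner_add_left, h1, h2, add_zero]
  | smul c _ _ h1 => rw [real_inner_smul_left, h1, mul_zero]

end StmtAux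

theorem stmt12 {d k : ℕ} (hk : 0 < k) {I J : Type*}
    (u : I → EuclideanSpace ℝ (Fin d)) (v : J → EuclideanSpace ℝ (Fin d))
    (h1 : ∀ i j, (inner ℝ (u i) (v j) : ℝ) ≤ 1)
    (S : Finset ℝ) (hS : S.card ≤ k)
    (hval : ∀ i j, 1 - (inner ℝ (u i) (v j) : ℝ) ∈ S) :
    ∃ (C C' : Set (EuclideanSpace ℝ (Fin d))),
      Convex ℝ C ∧
      C = C' + ((Submodule.span ℝ (Set.range v))ᗮ : Set (EuclideanSpace ℝ (Fin d))) ∧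
      C' ⊆ (Submodule.span ℝ (Set.range v) : Set (EuclideanSpace ℝ (Fin d))) ∧
      (∃ r : ℕ, r ≤ (d + k).choose (k - 1) ∧
        ∃ (A : AffineSubspace ℝ (Matrix (Fin r) (Fin r) ℝ))
          (T : Matrix (Fin r) (Fin r) ℝ →ᵃ[ℝ] EuclideanSpace ℝ (Fin d)),
          C' = T '' ((A : Set (Matrix (Fin r) (Fin r) ℝ)) ∩ {M | M.PosSemidef})) ∧
      (∀ i, u i ∈ C) ∧ (∀ x ∈ C, ∀ j, (inner ℝ x (v j) : ℝ) ≤ 1) := by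
  classical
  set L : Submodule ℝ (EuclideanSpace ℝ (Fin d)) := Submodule.span ℝ (Set.range v) with hL
  have hvL : ∀ j, v j ∈ L := fun j => Submodule.subset_span (Set.mem_range_self j)
  obtain ⟨K, rfl⟩ : ∃ K, k = K + 1 := ⟨k - 1, (Nat.succ_pred_eq_of_pos hk).symm⟩
  rcases K with _ | K'
  · -- k = 1
    by_cases hI : Nonempty I
    · obtain ⟨i₀⟩ := hI
      set p : EuclideanSpace ℝ (Fin d) :=
        (L.orthogonalProjectionOnto (u i₀) : EuclideanSpace ℝ (Fin d)) with hp
      have hpL : p ∈ L := SetLike.coe_mem _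
      have hpo : u i₀ - p ∈ Lᗮ := L.sub_starProjection_mem_orthogonal (u i₀)
      have hpv : ∀ j, (inner ℝ p (v j) : ℝ) = inner ℝ (u i₀) (v j) := by
        intro j
        have h0 : (inner ℝ (u i₀ - p) (v j) : ℝ) = 0 := by
          rw [real_inner_comm]
          exact (Submodule.mem_orthogonal L _).mp hpo _ (hvL j)
        rw [inner_sub_left] at h0
        linarith
      have hup : ∀ i, u i - p ∈ Lᗮ := by
        intro i
        have h2 : u i - p = (u i - u i₀) + (u i₀ - p) := by abel
        rw [h2]
        refine Submodule.add_mem _ ?_ hpo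
        rw [hL]
        refine mem_orth_span ?_
        rintro z ⟨j, rfl⟩
        have hvv : (1:ℝ) - inner ℝ (u i) (v j) = 1 - inner ℝ (u i₀) (v j) :=
          Finset.card_le_one.mp hS _ (hval i j) _ (hval i₀ j)
        rw [real_inner_comm, inner_sub_left]
        linarith
      refine ⟨{p} + (Lᗮ : Set _), {p}, (convex_singleton p).add (Lᗮ).convex, rfl,
        by simpa using hpL, ?_, ?_, ?_⟩
      · refine ⟨1, by simp, ⊤, AffineMap.const ℝ _ p, ?_⟩
        have hne : (((⊤ : AffineSubspace ℝ (Matrix (Fin 1) (Fin 1) ℝ)) :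
            Set (Matrix (Fin 1) (Fin 1) ℝ)) ∩ {M | M.PosSemidef}).Nonempty := by
          refine ⟨0, ?_, Matrix.isHermitian_zero, fun x => by simp⟩
          simp
        rw [AffineMap.coe_const]
        exact (hne.image_const p).symm
      · intro i
        have h3 : u i = p + (u i - p) := by abel
        rw [h3]
        exact Set.add_mem_add rfl (hup i)
      · rintro x ⟨y, hy, z, hz, rfl⟩ j
        rw [Set.mem_singleton_iff] at hy
        subst hy
        have h0 : (inner ℝ z (v j) : ℝ) = 0 := by
          rw [real_inner_comm]
          exact (Submodule.mem_orthogonal L _).mp hz _ (hvL j)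
        rw [inner_add_left, h0, add_zero, hpv]
        exact h1 i₀ j
    · refine ⟨(∅ : Set _) + (Lᗮ : Set _), ∅, ?_, rfl, by simp, ?_,
        fun i => absurd ⟨i⟩ hI, ?_⟩
      · rw [Set.empty_add]; exact convex_empty
      · refine ⟨1, by simp, ⟨{M | M 0 0 = -1}, ?_⟩, AffineMap.const ℝ _ 0, ?_⟩
        · intro c p₁ p₂ p₃ h₁ h₂ h₃
          simp only [Set.mem_setOf_eq, vsub_eq_sub, vadd_eq_add, Matrix.add_apply,
            Matrix.smul_apply, Matrix.sub_apply, smul_eq_mul] at *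
          rw [h₁, h₂, h₃]
          ring
        · have hemp : (({M : Matrix (Fin 1) (Fin 1) ℝ | M 0 0 = -1} : Set _)
              ∩ {M | M.PosSemidef}) = ∅ := by
            ext M
            simp only [Set.mem_inter_iff, Set.mem_setOf_eq, Set.mem_empty_iff_false, iff_false,
              not_and]
            intro hM1 hM2
            have h4 := hM2.dotProduct_mulVec_nonneg (fun _ => 1)
            simp only [star_trivial, dotProduct, Matrix.mulVec, Fin.sum_univ_one,
              mul_one, one_mul] at h4
            rw [hM1] at h4
            linarith
          show _ = AffineMap.const ℝ _ (0 : EuclideanSpace ℝ (Fin d)) ''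
            (({M : Matrix (Fin 1) (Fin 1) ℝ | M 0 0 = -1} : Set _) ∩ {M | M.PosSemidef})
          rw [hemp]
          simp
      · rintro x ⟨y, hy, z, hz, rfl⟩
        exact absurd hy (Set.notMem_empty y)
  · -- k = K' + 2
    obtain ⟨f, hfdeg, hfval⟩ := interp_exists (by omega : 0 < K' + 1 + 1) S hS
    have hexp : ∀ j, ∃ w : Sym (Option (Fin d)) (K' + 1) → ℝ,
        ∀ x : EuclideanSpace ℝ (Fin d),
          f.eval (1 - (inner ℝ x (v j) : ℝ)) = ∑ m, w m * phi m x :=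
      fun j => expand_poly f (by omega) (v j)
    choose w₀ hw₀ using hexp
    set r := Fintype.card (Sym (Option (Fin d)) (K' + 1)) with hr
    have hrle : r ≤ (d + (K' + 1 + 1)).choose (K' + 1 + 1 - 1) := by
      rw [hr, Sym.card_sym_eq_choose]
      simp only [Fintype.card_option, Fintype.card_fin]
      have h5 : d + 1 + (K' + 1) - 1 = d + (K' + 1) := by omega
      rw [h5]
      have h6 : K' + 1 + 1 - 1 = K' + 1 := by omega
      rw [h6]
      exact Nat.choose_le_choose _ (by omega)
    let eqv : Sym (Option (Fin d)) (K' + 1) ≃ Fin r := Fintype.equivFin _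
    let Φ : Fin r → EuclideanSpace ℝ (Fin d) → ℝ := fun n x => phi (eqv.symm n) x
    let w : J → Fin r → ℝ := fun j n => w₀ j (eqv.symm n)
    have hsum : ∀ j (x : EuclideanSpace ℝ (Fin d)),
        f.eval (1 - (inner ℝ x (v j) : ℝ)) = ∑ n : Fin r, w j n * Φ n x := by
      intro j x
      rw [hw₀ j x]
      exact (Equiv.sum_comp eqv.symm (fun m => w₀ j m * phi m x)).symm
    let n₀ : Fin r := eqv (Sym.replicate (K' + 1) none)
    let nv : Fin d → Fin r := fun s => eqv (Sym.mk ((some s) ::ₘ Multiset.replicate K' none) (by simp))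
    have hΦ0 : ∀ x, Φ n₀ x = 1 := by
      intro x
      show phi (eqv.symm (eqv _)) x = 1
      rw [Equiv.symm_apply_apply]
      simp [phi, Sym.coe_replicate, xe]
    have hΦv : ∀ (x : EuclideanSpace ℝ (Fin d)) s, Φ (nv s) x = x s := by
      intro x s
      show phi (eqv.symm (eqv _)) x = x s
      rw [Equiv.symm_apply_apply]
      simp [phi, xe]
    let π : Matrix (Fin r) (Fin r) ℝ →ₗ[ℝ] EuclideanSpace ℝ (Fin d) :=
      { toFun := fun M => (WithLp.toLp 2 (fun s => M n₀ (nv s)) : EuclideanSpace ℝ (Fin d))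
        map_add' := fun M N => rfl
        map_smul' := fun c M => rfl }
    let p : I → EuclideanSpace ℝ (Fin d) :=
      fun i => (L.orthogonalProjectionOnto (u i) : EuclideanSpace ℝ (Fin d))
    have hpL : ∀ i, p i ∈ L := fun i => SetLike.coe_mem _
    have hpo : ∀ i, u i - p i ∈ Lᗮ := fun i => L.sub_starProjection_mem_orthogonal (u i)
    have hpv : ∀ i j, (inner ℝ (p i) (v j) : ℝ) = inner ℝ (u i) (v j) := by
      intro i j
      have h0 : (inner ℝ (u i - p i) (v j) : ℝ) = 0 := by
        rw [real_inner_comm]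
        exact (Submodule.mem_orthogonal L _).mp (hpo i) _ (hvL j)
      rw [inner_sub_left] at h0
      linarith
    let a : I → Fin r → ℝ := fun i n => Φ n (p i)
    let X : I → Matrix (Fin r) (Fin r) ℝ := fun i => Matrix.vecMulVec (a i) (a i)
    have hπX : ∀ i, π (X i) = p i := by
      intro i
      ext s
      show (X i) n₀ (nv s) = p i s
      rw [show (X i) n₀ (nv s) = a i n₀ * a i (nv s) from rfl]
      show Φ n₀ (p i) * Φ (nv s) (p i) = p i s
      rw [hΦ0, hΦv, one_mul]
    have hquad : ∀ i j, w j ⬝ᵥ (X i *ᵥ w j) = 1 - inner ℝ (u i) (v j) := by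
      intro i j
      rw [show (X i : Matrix (Fin r) (Fin r) ℝ) = Matrix.vecMulVec (a i) (a i) from rfl,
        quad_vecMulVec]
      have hdot : a i ⬝ᵥ w j = f.eval (1 - (inner ℝ (u i) (v j) : ℝ)) := by
        rw [← hpv i j, hsum j (p i)]
        exact Finset.sum_congr rfl fun n _ => by rw [mul_comm]
      rw [hdot, hfval _ (hval i j) (by linarith [h1 i j]),
        Real.mul_self_sqrt (by linarith [h1 i j])]
    let A : AffineSubspace ℝ (Matrix (Fin r) (Fin r) ℝ) :=
      { carrier := {M | π M ∈ L ∧ ∀ j, w j ⬝ᵥ (M *ᵥ w j) + (inner ℝ (π M) (v j) : ℝ) = 1}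
        smul_vsub_vadd_mem' := by
          intro c p₁ p₂ p₃ h₁ h₂ h₃
          simp only [Set.mem_setOf_eq, vsub_eq_sub, vadd_eq_add] at *
          constructor
          · rw [map_add, map_smul, map_sub]
            exact L.add_mem (L.smul_mem _ (L.sub_mem h₁.1 h₂.1)) h₃.1
          · intro j
            have e1 := h₁.2 j
            have e2 := h₂.2 j
            have e3 := h₃.2 j
            rw [map_add, map_smul, map_sub, Matrix.add_mulVec, Matrix.smul_mulVec,
              Matrix.sub_mulVec, dotProduct_add, dotProduct_smul,
              dotProduct_sub, inner_add_left, real_inner_smul_left, inner_sub_left,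
              smul_eq_mul]
            linear_combination c * e1 - c * e2 + e3 }
    refine ⟨(π.toAffineMap '' ((A : Set _) ∩ {M | M.PosSemidef})) + (Lᗮ : Set _),
      π.toAffineMap '' ((A : Set _) ∩ {M | M.PosSemidef}),
      ((A.convex.inter convex_psd).affine_image _).add (Lᗮ).convex, rfl, ?_,
      ⟨r, hrle, A, π.toAffineMap, rfl⟩, ?_, ?_⟩
    · rintro x ⟨M, ⟨hMA, _⟩, rfl⟩
      exact hMA.1
    · intro i
      have hXA : X i ∈ (A : Set _) := by
        refine ⟨by rw [hπX]; exact hpL i, fun j => ?_⟩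
        rw [hquad i j, hπX, hpv]
        ring
      have h7 : u i = π (X i) + (u i - p i) := by rw [hπX]; abel
      rw [h7]
      exact Set.add_mem_add ⟨X i, ⟨hXA, psd_vecMulVec (a i)⟩, rfl⟩ (hpo i)
    · rintro x ⟨y, ⟨M, ⟨hMA, hMP⟩, rfl⟩, z, hz, rfl⟩ j
      have h0 : (inner ℝ z (v j) : ℝ) = 0 := by
        rw [real_inner_comm]
        exact (Submodule.mem_orthogonal L _).mp hz _ (hvL j)
      have hps : 0 ≤ w j ⬝ᵥ (M *ᵥ w j) := by simpa using hMP.dotProduct_mulVec_nonneg (w j)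
      have h8 := hMA.2 j
      rw [inner_add_left, h0, add_zero]
      show (inner ℝ (π M) (v j) : ℝ) ≤ 1
      linarith
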